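/- Let ψ be a pure 2n-qubit state with hypermatrix ψ̂ and vectorization |ψ⟩ ∈ ℂ^{4^n}. Then the n-tangle satisfies τ_n(ψ) = 4 |hdet(ψ̂)|². -/

import Mathlib

/-- The `k`-th bit (big-endian, `0`-based) of an index `j`, so that for `j < 2^n`,
`j = Σ_k (bit j k) · 2^{n-1-k}` (lexicographic order of bit strings). -/
def qbit (n : ℕ) (j : ℕ) (k : Fin n) : Fin 2 :=
  ⟨j / 2 ^ (n - 1 - (k : ℕ)) % 2, by omega⟩

/-- The vectorization `|ψ⟩ ∈ ℂ^{4^n}` of a `2n`-qubit hypermatrix, listing the entries in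
lexicographic order of the binary index `j = Σ_k i_k 2^{2n−k}`. -/
noncomputable def vecQ (n : ℕ) (ψ : (Fin (2 * n) → Fin 2) → ℂ) : Fin (4 ^ n) → ℂ :=
  fun j => ψ (qbit (2 * n) (j : ℕ))

/-- The second Pauli matrix `σ_y = [[0, −i], [i, 0]]`. -/
noncomputable def pauliY : Matrix (Fin 2) (Fin 2) ℂ :=
  !![0, -Complex.I; Complex.I, 0]

/-- The `2n`-fold Kronecker power `σ_y^{⊗2n}` as a `4^n × 4^n` matrix
(indices encoded lexicographically by their `2n` bits). -/
noncomputable def pauliYPow (n : ℕ) : Matrix (Fin (4 ^ n)) (Fin (4 ^ n)) ℂ :=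
  fun i j => ∏ k : Fin (2 * n), pauliY (qbit (2 * n) (i : ℕ) k) (qbit (2 * n) (j : ℕ) k)

/-- The combinatorial hyperdeterminant of an order-`N` side-2 hypermatrix:
`hdet H = Σ_{σ_2,...,σ_N ∈ S_2} (−1)^m H_{0σ_2(0)...σ_N(0)} H_{1σ_2(1)...σ_N(1)}`,
where `m` is the number of the permutations `σ_2,...,σ_N` that are transpositions. -/
noncomputable def hdetQ (N : ℕ) (hN : 0 < N) (H : (Fin N → Fin 2) → ℂ) : ℂ :=
  ∑ σ : Fin N → Equiv.Perm (Fin 2),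
    if σ ⟨0, hN⟩ = 1 then
      (∏ k, ((Equiv.Perm.sign (σ k) : ℤ) : ℂ)) *
        (H (fun k => σ k 0) * H (fun k => σ k 1))
    else 0

/-! ### Auxiliary machinery -/

private lemma encL_lt : ∀ (N : ℕ) (f : Fin N → Fin 2),
    (∑ i, (f i : ℕ) * 2 ^ (i : ℕ)) < 2 ^ N := by
  intro N
  induction N with
  | zero => intro f; simp
  | succ N ih =>
    intro f
    rw [Fin.sum_univ_succ]
    have h1 : (∑ i : Fin N, ((f i.succ : ℕ)) * 2 ^ (i.succ : ℕ))
        = (∑ i : Fin N, (f i.succ : ℕ) * 2 ^ (i : ℕ)) * 2 := by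
      rw [Finset.sum_mul]
      exact Finset.sum_congr rfl fun i _ => by rw [Fin.val_succ, pow_succ, mul_assoc]
    rw [h1]
    have h2 := ih (fun i => f i.succ)
    have h3 : (f 0 : ℕ) < 2 := (f 0).isLt
    have h4 : (2:ℕ) ^ (N + 1) = 2 ^ N * 2 := pow_succ 2 N
    simp only [Fin.val_zero, pow_zero, mul_one]
    omega

private lemma encL_bit : ∀ (N : ℕ) (f : Fin N → Fin 2) (k : Fin N),
    (∑ i, (f i : ℕ) * 2 ^ (i : ℕ)) / 2 ^ (k : ℕ) % 2 = f k := by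
  intro N
  induction N with
  | zero => intro f k; exact k.elim0
  | succ N ih =>
    intro f k
    rw [Fin.sum_univ_succ]
    have h1 : (∑ i : Fin N, ((f i.succ : ℕ)) * 2 ^ (i.succ : ℕ))
        = 2 * ∑ i : Fin N, (f i.succ : ℕ) * 2 ^ (i : ℕ) := by
      rw [Finset.mul_sum]
      exact Finset.sum_congr rfl fun i _ => by rw [Fin.val_succ, pow_succ]; ring
    rw [h1]
    have h3 : (f 0 : ℕ) < 2 := (f 0).isLt
    cases k using Fin.cases with
    | zero =>
      simp only [Fin.val_zero, pow_zero, mul_one, Nat.div_one]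
      omega
    | succ k =>
      have hih := ih (fun i => f i.succ) k
      simp only [Fin.val_succ, Fin.val_zero, pow_zero, mul_one]
      rw [pow_succ', ← Nat.div_div_eq_div_mul,
        Nat.add_mul_div_left _ _ (by norm_num : (0:ℕ) < 2),
        Nat.div_eq_of_lt h3, zero_add]
      exact hih

private def encF {N : ℕ} (f : Fin N → Fin 2) : ℕ := ∑ i, (f i : ℕ) * 2 ^ (N - 1 - (i : ℕ))

private lemma encF_eq {N : ℕ} (f : Fin N → Fin 2) :
    encF f = ∑ i : Fin N, (f i.rev : ℕ) * 2 ^ (i : ℕ) := by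
  rw [encF, ← Equiv.sum_comp (Fin.revPerm : Equiv.Perm (Fin N))
      (fun i => (f i : ℕ) * 2 ^ (N - 1 - (i : ℕ)))]
  apply Finset.sum_congr rfl
  intro i _
  simp only [Fin.revPerm_apply]
  congr 1
  have h1 : (Fin.rev i : ℕ) = N - 1 - (i : ℕ) := by
    rw [Fin.val_rev]; omega
  rw [h1]
  have h2 : (i : ℕ) < N := i.isLt
  congr 1
  omega

private lemma encF_lt {N : ℕ} (f : Fin N → Fin 2) : encF f < 2 ^ N := by
  rw [encF_eq]; exact encL_lt N (fun i => f i.rev)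

private lemma qbit_encF {N : ℕ} (f : Fin N → Fin 2) (k : Fin N) :
    qbit N (encF f) k = f k := by
  apply Fin.ext
  show encF f / 2 ^ (N - 1 - (k : ℕ)) % 2 = (f k : ℕ)
  have hv : (Fin.rev k : ℕ) = N - 1 - (k : ℕ) := by rw [Fin.val_rev]; omega
  rw [encF_eq, ← hv]
  have := encL_bit N (fun i => f i.rev) k.rev
  simpa [Fin.rev_rev] using this

private def encQ (n : ℕ) (f : Fin (2 * n) → Fin 2) : Fin (4 ^ n) :=
  ⟨encF f, lt_of_lt_of_eq (encF_lt f) (by rw [pow_mul]; norm_num)⟩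

private lemma qbit_encQ (n : ℕ) (f : Fin (2 * n) → Fin 2) :
    qbit (2 * n) ((encQ n f : ℕ)) = f := funext fun k => qbit_encF f k

private lemma encQ_bijective (n : ℕ) : Function.Bijective (encQ n) := by
  rw [Fintype.bijective_iff_injective_and_card]
  constructor
  · intro f g h
    have h2 : qbit (2 * n) ((encQ n f : ℕ)) = qbit (2 * n) ((encQ n g : ℕ)) := by rw [h]
    rwa [qbit_encQ, qbit_encQ] at h2
  · simp only [Fintype.card_fun, Fintype.card_fin]
    rw [pow_mul]; norm_num

private lemma sum_encQ (n : ℕ) (F : Fin (4 ^ n) → ℂ) :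
    ∑ j, F j = ∑ f : Fin (2 * n) → Fin 2, F (encQ n f) :=
  (Fintype.sum_bijective (encQ n) (encQ_bijective n) _ _ (fun _ => rfl)).symm

/-! ### Pointwise `Fin 2` facts -/

private lemma pauliY_flip (x : Fin 2) :
    pauliY x (x + 1) = Complex.I * (if x = 0 then -1 else 1) := by
  fin_cases x <;> simp [pauliY]

private lemma pauliY_diag (x : Fin 2) : pauliY x x = 0 := by
  fin_cases x <;> simp [pauliY]

private lemma fin2_ne_flip {x y : Fin 2} (h : y ≠ x + 1) : y = x := by
  fin_cases x <;> fin_cases y <;> simp_all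

private lemma fin2_flip_flip (x : Fin 2) : x + 1 + 1 = x := by revert x; decide

private lemma fin2_flip_eq_zero (x : Fin 2) : (x + 1 = 0) ↔ ¬ (x = 0) := by revert x; decide

private lemma fin2_sgn_flip (x : Fin 2) :
    (if x + 1 = 0 then (-1:ℂ) else 1) = if x = 0 then 1 else -1 := by
  fin_cases x <;> simp

private def e2 : Fin 2 ≃ Equiv.Perm (Fin 2) where
  toFun b := if b = 0 then 1 else Equiv.swap 0 1
  invFun σ := σ 0
  left_inv := by decide
  right_inv := by decide

private lemma e2_eq_one (x : Fin 2) : (e2 x = 1) ↔ x = 0 := by revert x; decide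

private lemma e2_apply_zero (x : Fin 2) : e2 x 0 = x := by revert x; decide

private lemma e2_apply_one (x : Fin 2) : e2 x 1 = x + 1 := by revert x; decide

private lemma e2_sign (x : Fin 2) :
    ((Equiv.Perm.sign (e2 x) : ℤ) : ℂ) = if x = 0 then 1 else -1 := by
  fin_cases x <;> simp [e2]

/-! ### Sign and flip on bit strings -/

private noncomputable def sgnQ {N : ℕ} (f : Fin N → Fin 2) : ℂ :=
  ∏ k, if f k = 0 then -1 else 1

private def flipQ {N : ℕ} (f : Fin N → Fin 2) : Fin N → Fin 2 := fun k => f k + 1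

private lemma flipQ_flipQ {N : ℕ} (f : Fin N → Fin 2) : flipQ (flipQ f) = f :=
  funext fun k => fin2_flip_flip (f k)

private lemma conj_sgnQ {N : ℕ} (f : Fin N → Fin 2) :
    (starRingEnd ℂ) (sgnQ f) = sgnQ f := by
  rw [sgnQ, map_prod]
  exact Finset.prod_congr rfl fun k _ => by split <;> simp

private lemma sgnQ_mul_self {N : ℕ} (f : Fin N → Fin 2) : sgnQ f * sgnQ f = 1 := by
  rw [sgnQ, ← Finset.prod_mul_distrib]
  rw [Finset.prod_eq_one]
  intro k _
  split <;> norm_num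

private lemma sgnQ_ne_zero {N : ℕ} (f : Fin N → Fin 2) : sgnQ f ≠ 0 :=
  left_ne_zero_of_mul_eq_one (sgnQ_mul_self f)

/- For even length, the "opposite" sign product equals `sgnQ`. -/
private lemma sgnQ'_eq {n : ℕ} (f : Fin (2 * n) → Fin 2) :
    (∏ k, if f k = 0 then (1:ℂ) else -1) = sgnQ f := by
  have h1 : sgnQ f * (∏ k, if f k = 0 then (1:ℂ) else -1) = 1 := by
    rw [sgnQ, ← Finset.prod_mul_distrib]
    have h2 : ∀ k ∈ Finset.univ, ((if f k = 0 then (-1:ℂ) else 1) *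
        (if f k = 0 then (1:ℂ) else -1)) = -1 := fun k _ => by split <;> norm_num
    rw [Finset.prod_congr rfl h2, Finset.prod_const, Finset.card_univ, Fintype.card_fin,
      pow_mul]
    norm_num
  exact mul_left_cancel₀ (sgnQ_ne_zero f) (h1.trans (sgnQ_mul_self f).symm)

private lemma sgnQ_flipQ {n : ℕ} (f : Fin (2 * n) → Fin 2) :
    sgnQ (flipQ f) = sgnQ f := by
  rw [← sgnQ'_eq f, sgnQ]
  exact Finset.prod_congr rfl fun k _ => fin2_sgn_flip (f k)

/-! ### The Pauli product -/

private lemma prod_pauliY {n : ℕ} (f g : Fin (2 * n) → Fin 2) :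
    (∏ k, pauliY (f k) (g k)) = if g = flipQ f then ((-1:ℂ) ^ n) * sgnQ f else 0 := by
  split
  case isTrue h =>
    subst h
    have h1 : ∀ k ∈ Finset.univ, pauliY (f k) (flipQ f k)
        = Complex.I * (if f k = 0 then (-1:ℂ) else 1) := fun k _ => pauliY_flip (f k)
    rw [Finset.prod_congr rfl h1, Finset.prod_mul_distrib, Finset.prod_const,
      Finset.card_univ, Fintype.card_fin]
    rw [pow_mul, Complex.I_sq]
    rfl
  case isFalse h =>
    obtain ⟨k, hk⟩ := Function.ne_iff.mp h
    refine Finset.prod_eq_zero (Finset.mem_univ k) ?_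
    rw [fin2_ne_flip hk]
    exact pauliY_diag (f k)

/-! ### The main theorem -/

/-- For a pure `2n`-qubit state `ψ`, the `n`-tangle
`τ_n(ψ) = |⟨ψ| σ_y^{⊗2n} |ψ*⟩|²` satisfies `τ_n(ψ) = 4 |hdet(ψ̂)|²`. -/
theorem n_tangle_eq_four_hdet_sq (n : ℕ) (hn : 1 ≤ n)
    (ψ : (Fin (2 * n) → Fin 2) → ℂ)
    (hψ : ∑ i, ‖ψ i‖ ^ 2 = 1) :
    ‖
        (dotProduct (fun j => (starRingEnd ℂ) (vecQ n ψ j))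
          ((pauliYPow n).mulVec (fun j => (starRingEnd ℂ) (vecQ n ψ j))))‖ ^ 2 =
      4 * ‖hdetQ (2 * n) (by omega) ψ‖ ^ 2 := by
  classical
  have hN : 0 < 2 * n := by omega
  set z : Fin (2 * n) := ⟨0, hN⟩ with hz
  set u : Fin (4 ^ n) → ℂ := fun j => (starRingEnd ℂ) (vecQ n ψ j) with hu
  have hvec : ∀ f, vecQ n ψ (encQ n f) = ψ f := fun f => by
    rw [vecQ]; rw [qbit_encQ]
  set S : ℂ := ∑ f : Fin (2 * n) → Fin 2, sgnQ f * (ψ f * ψ (flipQ f)) with hSdef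
  -- Step 1: the dot product equals (-1)^n * conj S
  have hD : dotProduct u ((pauliYPow n).mulVec u)
      = ((-1:ℂ) ^ n) * (starRingEnd ℂ) S := by
    simp only [dotProduct, Matrix.mulVec]
    calc ∑ j, u j * ∑ j', pauliYPow n j j' * u j'
        = ∑ f : Fin (2 * n) → Fin 2,
            u (encQ n f) * ∑ j', pauliYPow n (encQ n f) j' * u j' := sum_encQ n _
      _ = ∑ f : Fin (2 * n) → Fin 2, u (encQ n f) *
            ∑ g : Fin (2 * n) → Fin 2, pauliYPow n (encQ n f) (encQ n g) * u (encQ n g) := by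
          exact Finset.sum_congr rfl fun f _ => by rw [sum_encQ n]
      _ = ∑ f : Fin (2 * n) → Fin 2, (starRingEnd ℂ) (ψ f) *
            (((-1:ℂ) ^ n) * sgnQ f * (starRingEnd ℂ) (ψ (flipQ f))) := by
          refine Finset.sum_congr rfl fun f _ => ?_
          have hP : ∀ g, pauliYPow n (encQ n f) (encQ n g)
              = if g = flipQ f then ((-1:ℂ) ^ n) * sgnQ f else 0 := by
            intro g
            rw [pauliYPow]
            rw [show (∏ k : Fin (2 * n), pauliY (qbit (2 * n) ((encQ n f : ℕ)) k)
                (qbit (2 * n) ((encQ n g : ℕ)) k)) = ∏ k, pauliY (f k) (g k) from by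
              rw [qbit_encQ, qbit_encQ]]
            exact prod_pauliY f g
          have hinner : (∑ g : Fin (2 * n) → Fin 2,
              pauliYPow n (encQ n f) (encQ n g) * u (encQ n g))
              = ((-1:ℂ) ^ n) * sgnQ f * (starRingEnd ℂ) (ψ (flipQ f)) := by
            calc (∑ g : Fin (2 * n) → Fin 2, pauliYPow n (encQ n f) (encQ n g) * u (encQ n g))
                = ∑ g : Fin (2 * n) → Fin 2, (if g = flipQ f then
                    (((-1:ℂ) ^ n) * sgnQ f) * u (encQ n g) else 0) := by
                  refine Finset.sum_congr rfl fun g _ => ?_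
                  rw [hP g, ite_mul, zero_mul]
              _ = (((-1:ℂ) ^ n) * sgnQ f) * u (encQ n (flipQ f)) := by
                  rw [Finset.sum_ite_eq' Finset.univ (flipQ f)
                    (fun g => (((-1:ℂ) ^ n) * sgnQ f) * u (encQ n g))]
                  simp
            rw [hu]; simp only [hvec]
          rw [hinner, hu]; simp only [hvec]
      _ = ((-1:ℂ) ^ n) * (starRingEnd ℂ) S := by
          rw [hSdef, map_sum, Finset.mul_sum]
          refine Finset.sum_congr rfl fun f _ => ?_
          rw [map_mul, map_mul, conj_sgnQ]
          ring
  -- Step 2: the hyperdeterminant as a sum over bit strings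
  have hH : hdetQ (2 * n) hN ψ
      = ∑ f : Fin (2 * n) → Fin 2,
          (if f z = 0 then sgnQ f * (ψ f * ψ (flipQ f)) else 0) := by
    rw [hdetQ, ← Equiv.sum_comp (Equiv.piCongrRight (fun _ : Fin (2 * n) => e2))]
    refine Finset.sum_congr rfl fun f _ => ?_
    have happ : ∀ k, (Equiv.piCongrRight (fun _ : Fin (2 * n) => e2)) f k = e2 (f k) :=
      fun k => rfl
    simp only [happ]
    have hps0 : (fun k => e2 (f k) 0) = f := funext fun k => e2_apply_zero (f k)
    have hps1 : (fun k => e2 (f k) 1) = flipQ f := funext fun k => e2_apply_one (f k)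
    have hprod : (∏ k : Fin (2 * n), ((Equiv.Perm.sign (e2 (f k)) : ℤ) : ℂ)) = sgnQ f := by
      rw [Finset.prod_congr rfl (fun k _ => e2_sign (f k))]
      exact sgnQ'_eq f
    rw [hps0, hps1, hprod]
    by_cases h0 : f z = 0
    · rw [if_pos ((e2_eq_one (f z)).mpr h0), if_pos h0]
    · rw [if_neg (fun hc => h0 ((e2_eq_one (f z)).mp hc)), if_neg h0]
  -- Step 3: S = 2 * hdet
  have hS : S = 2 * hdetQ (2 * n) hN ψ := by
    rw [hH]
    set t : (Fin (2 * n) → Fin 2) → ℂ := fun f => sgnQ f * (ψ f * ψ (flipQ f)) with ht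
    have key : ∀ f, t (flipQ f) = t f := by
      intro f
      show sgnQ (flipQ f) * (ψ (flipQ f) * ψ (flipQ (flipQ f))) = sgnQ f * (ψ f * ψ (flipQ f))
      rw [flipQ_flipQ, sgnQ_flipQ]; ring
    have flipInv : Function.Involutive (flipQ (N := 2 * n)) := fun f => flipQ_flipQ f
    have hB : (∑ f : Fin (2 * n) → Fin 2, if f z = 0 then (0:ℂ) else t f)
        = ∑ f : Fin (2 * n) → Fin 2, (if f z = 0 then t f else 0) := by
      rw [← Equiv.sum_comp (Function.Involutive.toPerm flipQ flipInv) (fun f => if f z = 0 then (0:ℂ) else t f)]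
      refine Finset.sum_congr rfl fun f _ => ?_
      have happ2 : (Function.Involutive.toPerm flipQ flipInv) f = flipQ f := rfl
      rw [happ2, key f]
      show (if f z + 1 = 0 then (0:ℂ) else t f) = if f z = 0 then t f else 0
      by_cases h : f z = 0
      · rw [if_neg (fun hc => ((fin2_flip_eq_zero (f z)).mp hc) h), if_pos h]
      · rw [if_pos ((fin2_flip_eq_zero (f z)).mpr h), if_neg h]
    calc S = ∑ f : Fin (2 * n) → Fin 2,
            ((if f z = 0 then t f else 0) + (if f z = 0 then (0:ℂ) else t f)) := by
          rw [hSdef]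
          refine Finset.sum_congr rfl fun f _ => ?_
          show t f = _
          split <;> ring
      _ = (∑ f : Fin (2 * n) → Fin 2, if f z = 0 then t f else 0)
          + (∑ f : Fin (2 * n) → Fin 2, if f z = 0 then (0:ℂ) else t f) :=
          Finset.sum_add_distrib
      _ = 2 * ∑ f : Fin (2 * n) → Fin 2, (if f z = 0 then t f else 0) := by rw [hB]; ring
  -- Final assembly
  have habs : ‖(-1:ℂ) ^ n * (starRingEnd ℂ) S‖ = ‖S‖ := by
    rw [norm_mul, norm_pow, Complex.norm_conj]
    simp
  have hgoal : hdetQ (2 * n) (by omega : 0 < 2 * n) ψ = hdetQ (2 * n) hN ψ := rfl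
  rw [hD, habs, hS, hgoal, norm_mul, show ‖(2:ℂ)‖ = 2 by norm_num]
  ring
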